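/- Let C_S be a set code of length n over Σ_q correcting t deletions and let C_UD ⊆ S_n be a permutation code of length n correcting t unstable deletions. Then C_1 = Φ^{-1}(C_S × C_UD) ⊆ M_q^n is a code correcting t deletions, and |C_1| = |C_S| · |C_UD|. -/

import Mathlib

/-- The induced permutation of a tuple `x` with pairwise distinct entries:
`inducedPerm x i` is the (0-indexed) rank of `x i` among the entries of `x`,
i.e. the inverse of the sorting permutation. -/
def inducedPerm {n : ℕ} {α : Type*} [LinearOrder α] (x : Fin n → α) : Equiv.Perm (Fin n) :=
  (Tuple.sort x)⁻¹

/-- `IsSubseq y x` : the sequence `y` is obtained from `x` by deleting some entries,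
keeping the relative order of the remaining entries. -/
def IsSubseq {α : Type*} {m n : ℕ} (y : Fin m → α) (x : Fin n → α) : Prop :=
  ∃ g : Fin m → Fin n, StrictMono g ∧ ∀ j, y j = x (g j)

/-- The induced set `A(x)` of a tuple. -/
def inducedSet {q n : ℕ} (x : Fin n → Fin q) : Finset (Fin q) :=
  Finset.image x Finset.univ

/-- The map `Φ : x ↦ (A(x), P(x))`. -/
def Phi {q n : ℕ} (x : Fin n → Fin q) : Finset (Fin q) × Equiv.Perm (Fin n) :=
  (inducedSet x, inducedPerm x)

/-- A code `C ⊆ Σ_q^n` corrects `t` deletions if no sequence of length `n - t`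
is a common subsequence of two distinct codewords. -/
def CorrectsDeletions (q n t : ℕ) (C : Set (Fin n → Fin q)) : Prop :=
  ∀ x ∈ C, ∀ x' ∈ C, ∀ y : Fin (n - t) → Fin q, IsSubseq y x → IsSubseq y x' → x = x'

/-- A set code (family of `n`-subsets of `Σ_q`) corrects `t` deletions if no
`(n - t)`-element subset is contained in two distinct codewords. -/
def SetCodeCorrects (q n t : ℕ) (CS : Set (Finset (Fin q))) : Prop :=
  ∀ A ∈ CS, ∀ B ∈ CS, ∀ D : Finset (Fin q), D.card = n - t → D ⊆ A → D ⊆ B → A = B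

/-- A permutation code corrects `t` stable deletions if, identifying each permutation
with its word, no word of length `n - t` is a common subsequence of two distinct codewords. -/
def PermCodeCorrectsStable (n t : ℕ) (C : Set (Equiv.Perm (Fin n))) : Prop :=
  ∀ σ ∈ C, ∀ σ' ∈ C, ∀ u : Fin (n - t) → Fin n,
    IsSubseq u ⇑σ → IsSubseq u ⇑σ' → σ = σ'

/-- A permutation code corrects `t` unstable deletions if there are no two distinct
codewords `σ, σ'` with subsequences `u` of `σ` and `u'` of `σ'`, both of length `n - t`,
having the same induced permutation. -/
def PermCodeCorrectsUnstable (n t : ℕ) (C : Set (Equiv.Perm (Fin n))) : Prop :=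
  ∀ σ ∈ C, ∀ σ' ∈ C, ∀ u u' : Fin (n - t) → Fin n,
    IsSubseq u ⇑σ → IsSubseq u' ⇑σ' → inducedPerm u = inducedPerm u' → σ = σ'


section Aux

variable {n m : ℕ} {α β : Type*} [LinearOrder α] [LinearOrder β]

lemma sort_strictMono {x : Fin n → α} (hx : Function.Injective x) :
    StrictMono (x ∘ Tuple.sort x) :=
  (Tuple.monotone_sort x).strictMono_of_injective (hx.comp (Equiv.injective _))

lemma inducedPerm_lt_iff {x : Fin n → α} (hx : Function.Injective x) {a b : Fin n} :
    inducedPerm x a < inducedPerm x b ↔ x a < x b := by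
  have h := sort_strictMono hx
  have hc : ∀ c, x c = (x ∘ Tuple.sort x) ((Tuple.sort x)⁻¹ c) := by
    intro c; simp
  rw [show (x a < x b) ↔ ((x ∘ Tuple.sort x) ((Tuple.sort x)⁻¹ a) <
      (x ∘ Tuple.sort x) ((Tuple.sort x)⁻¹ b)) from by rw [← hc, ← hc], h.lt_iff_lt]
  rfl

lemma inducedPerm_congr {y : Fin m → α} {u : Fin m → β}
    (hy : Function.Injective y) (hu : Function.Injective u)
    (h : ∀ j k, y j < y k ↔ u j < u k) : inducedPerm y = inducedPerm u := by
  have hsort : Tuple.sort u = Tuple.sort y := by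
    rw [Tuple.eq_sort_iff]
    constructor
    · intro i j hij
      rcases lt_or_eq_of_le hij with hlt | heq
      · exact le_of_lt ((h _ _).mpr ((sort_strictMono hu) hlt))
      · rw [heq]
    · intro i j hij hequ
      exact absurd (hy hequ) (by
        intro hc
        exact absurd ((Tuple.sort u).injective hc) (ne_of_lt hij))
  unfold inducedPerm
  rw [hsort]

lemma inducedSet_card {q : ℕ} {x : Fin n → Fin q} (hx : Function.Injective x) :
    (inducedSet x).card = n := by
  rw [inducedSet, Finset.card_image_of_injective _ hx, Finset.card_univ, Fintype.card_fin]

lemma phi_inj {q : ℕ} {x x' : Fin n → Fin q} (hx : Function.Injective x)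
    (hx' : Function.Injective x') (hA : inducedSet x = inducedSet x')
    (hP : inducedPerm x = inducedPerm x') : x = x' := by
  have hs : (inducedSet x).card = n := inducedSet_card hx
  have he : x ∘ Tuple.sort x = ⇑((inducedSet x).orderEmbOfFin hs) :=
    Finset.orderEmbOfFin_unique hs
      (fun i => Finset.mem_image.mpr ⟨_, Finset.mem_univ _, rfl⟩) (sort_strictMono hx)
  have he' : x' ∘ Tuple.sort x' = ⇑((inducedSet x).orderEmbOfFin hs) :=
    Finset.orderEmbOfFin_unique hs
      (fun i => hA ▸ Finset.mem_image.mpr ⟨_, Finset.mem_univ _, rfl⟩)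
      (sort_strictMono hx')
  have hst : Tuple.sort x = Tuple.sort x' := inv_injective hP
  funext i
  have h1 : x i = (x ∘ Tuple.sort x) ((Tuple.sort x)⁻¹ i) := by simp
  have h2 : x' i = (x' ∘ Tuple.sort x') ((Tuple.sort x')⁻¹ i) := by simp
  rw [h1, h2, he, he', hst]

end Aux

/-- If C_S is a set code of length n over Σ_q correcting t deletions, and
C_UD ⊆ S_n is a permutation code correcting t unstable deletions, then
C_1 = Φ⁻¹(C_S × C_UD) ⊆ M_q^n corrects t deletions and |C_1| = |C_S| · |C_UD|. -/
theorem stmt_3 (q n t : ℕ) (ht : 0 < t) (htn : t < n) (hnq : n ≤ q)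
    (CS : Set (Finset (Fin q))) (hCSn : ∀ A ∈ CS, A.card = n)
    (hCS : SetCodeCorrects q n t CS)
    (CUD : Set (Equiv.Perm (Fin n))) (hCUD : PermCodeCorrectsUnstable n t CUD) :
    CorrectsDeletions q n t
        ({x : Fin n → Fin q | Function.Injective x} ∩ Phi ⁻¹' (CS ×ˢ CUD)) ∧
    Nat.card ({x : Fin n → Fin q | Function.Injective x} ∩ Phi ⁻¹' (CS ×ˢ CUD) :
        Set (Fin n → Fin q)) = Nat.card CS * Nat.card CUD := by
  set C : Set (Fin n → Fin q) :=
    {x : Fin n → Fin q | Function.Injective x} ∩ Phi ⁻¹' (CS ×ˢ CUD) with hC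
  have hmem : ∀ x ∈ C, Function.Injective x ∧ inducedSet x ∈ CS ∧ inducedPerm x ∈ CUD := by
    intro x hx
    exact ⟨hx.1, hx.2.1, hx.2.2⟩
  constructor
  · intro x hx x' hx' y hyx hyx'
    obtain ⟨hxi, hxA, hxP⟩ := hmem x hx
    obtain ⟨hxi', hxA', hxP'⟩ := hmem x' hx'
    obtain ⟨g, hg, hyg⟩ := hyx
    obtain ⟨g', hg', hyg'⟩ := hyx'
    have hyi : Function.Injective y := by
      intro j k hjk
      exact hg.injective (hxi (by rw [← hyg, ← hyg]; exact hjk))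
    have hD : inducedSet y ∈ CS → True := fun _ => trivial
    have hDx : inducedSet y ⊆ inducedSet x := by
      intro a ha
      obtain ⟨j, -, rfl⟩ := Finset.mem_image.mp ha
      exact Finset.mem_image.mpr ⟨g j, Finset.mem_univ _, (hyg j).symm⟩
    have hDx' : inducedSet y ⊆ inducedSet x' := by
      intro a ha
      obtain ⟨j, -, rfl⟩ := Finset.mem_image.mp ha
      exact Finset.mem_image.mpr ⟨g' j, Finset.mem_univ _, (hyg' j).symm⟩
    have hA : inducedSet x = inducedSet x' :=
      hCS _ hxA _ hxA' (inducedSet y) (inducedSet_card hyi) hDx hDx'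
    -- unstable deletion argument
    set u : Fin (n - t) → Fin n := fun j => inducedPerm x (g j) with hu
    set u' : Fin (n - t) → Fin n := fun j => inducedPerm x' (g' j) with hu'
    have hui : Function.Injective u :=
      (inducedPerm x).injective.comp hg.injective
    have hui' : Function.Injective u' :=
      (inducedPerm x').injective.comp hg'.injective
    have h1 : inducedPerm u = inducedPerm y := by
      refine inducedPerm_congr hui hyi ?_
      intro j k
      rw [hu]
      simp only
      rw [(inducedPerm_lt_iff hxi), hyg, hyg]
    have h2 : inducedPerm u' = inducedPerm y := by
      refine inducedPerm_congr hui' hyi ?_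
      intro j k
      rw [hu']
      simp only
      rw [(inducedPerm_lt_iff hxi'), hyg', hyg']
    have hP : inducedPerm x = inducedPerm x' :=
      hCUD _ hxP _ hxP' u u' ⟨g, hg, fun j => rfl⟩ ⟨g', hg', fun j => rfl⟩
        (h1.trans h2.symm)
    exact phi_inj hxi hxi' hA hP
  · have hbij : Set.BijOn Phi C (CS ×ˢ CUD) := by
      refine ⟨fun x hx => hx.2, ?_, ?_⟩
      · intro x hx x' hx' hxx
        have h1 : inducedSet x = inducedSet x' := congrArg Prod.fst hxx
        have h2 : inducedPerm x = inducedPerm x' := congrArg Prod.snd hxx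
        exact phi_inj hx.1 hx'.1 h1 h2
      · rintro ⟨A, σ⟩ ⟨hA, hσ⟩
        have hAn : A.card = n := hCSn A hA
        set e := A.orderEmbOfFin hAn with he
        refine ⟨⇑e ∘ ⇑σ, ?_, ?_⟩
        · have hinj : Function.Injective (⇑e ∘ ⇑σ) :=
            e.injective.comp σ.injective
          have hset : inducedSet (⇑e ∘ ⇑σ) = A := by
            apply Finset.eq_of_subset_of_card_le
            · intro a ha
              obtain ⟨j, -, rfl⟩ := Finset.mem_image.mp ha
              exact Finset.orderEmbOfFin_mem A hAn (σ j)
            · rw [hAn, inducedSet_card hinj]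
          have hsort : (σ : Equiv.Perm (Fin n))⁻¹ = Tuple.sort (⇑e ∘ ⇑σ) := by
            rw [Tuple.eq_sort_iff]
            constructor
            · intro i j hij
              simp only [Function.comp_apply, Equiv.Perm.inv_def, Equiv.apply_symm_apply]
              exact e.strictMono.monotone hij
            · intro i j hij heq
              exact absurd (σ.injective (e.injective heq))
                (by
                  intro hc
                  exact absurd (σ⁻¹.injective hc) (ne_of_lt hij))
          have hperm : inducedPerm (⇑e ∘ ⇑σ) = σ := by
            rw [inducedPerm, ← hsort, inv_inv]
          exact ⟨hinj, by rw [Set.mem_preimage, Phi, hset, hperm]; exact ⟨hA, hσ⟩⟩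
        · have hset : inducedSet (⇑e ∘ ⇑σ) = A := by
            apply Finset.eq_of_subset_of_card_le
            · intro a ha
              obtain ⟨j, -, rfl⟩ := Finset.mem_image.mp ha
              exact Finset.orderEmbOfFin_mem A hAn (σ j)
            · rw [hAn, inducedSet_card (e.injective.comp σ.injective)]
          have hsort : (σ : Equiv.Perm (Fin n))⁻¹ = Tuple.sort (⇑e ∘ ⇑σ) := by
            rw [Tuple.eq_sort_iff]
            constructor
            · intro i j hij
              simp only [Function.comp_apply, Equiv.Perm.inv_def, Equiv.apply_symm_apply]
              exact e.strictMono.monotone hij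
            · intro i j hij heq
              exact absurd (σ.injective (e.injective heq))
                (by
                  intro hc
                  exact absurd (σ⁻¹.injective hc) (ne_of_lt hij))
          have hperm : inducedPerm (⇑e ∘ ⇑σ) = σ := by
            rw [inducedPerm, ← hsort, inv_inv]
          rw [Phi, hset, hperm]
    calc Nat.card C = Nat.card (CS ×ˢ CUD : Set _) := Nat.card_congr (hbij.equiv _)
      _ = Nat.card CS * Nat.card CUD := by
          rw [Nat.card_congr (Equiv.Set.prod CS CUD), Nat.card_prod]
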